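/- Suppose dist takes values in the nonnegative integers with dist(i,i) = 0 for all i, and A_c is a real matrix (partitioned into the agents' blocks) such that [A_c]_{ij} = 0 whenever dist(i,j) > 1. Then for every Δt > 0 and all i,j ∈ [N], ‖[exp(Δt·A_c)]_{ij}‖ ≤ e^{Δt·‖A_c‖}·(Δt·‖A_c‖)^{dist(i,j)}; equivalently, when Δt·‖A_c‖ < 1 the matrix exp(Δt·A_c) is (e^{Δt·‖A_c‖}, −ln(Δt·‖A_c‖))-SED. -/

import Mathlib

open scoped Matrix.Norms.L2Operator
open Matrix

noncomputable section

/-- Index type of a vector partitioned into `N` agent blocks of sizes `d`. -/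
abbrev BIdx {N : ℕ} (d : Fin N → ℕ) : Type := (i : Fin N) × Fin (d i)

/-- The `(i,j)` agent block of a block-partitioned matrix. -/
def blk {N : ℕ} {d e : Fin N → ℕ} (X : Matrix (BIdx d) (BIdx e) ℝ) (i j : Fin N) :
    Matrix (Fin (d i)) (Fin (e j)) ℝ :=
  Matrix.of fun a b => X ⟨i, a⟩ ⟨j, b⟩

/-- `X` is `(c, γ)`-spatially exponentially decaying w.r.t. `dist`:
`‖[X]_{ij}‖ ≤ c e^{-γ dist(i,j)}` for all agents `i, j`. -/
def IsSED {N : ℕ} {d e : Fin N → ℕ} (dist : Fin N → Fin N → ℝ) (c γ : ℝ)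
    (X : Matrix (BIdx d) (BIdx e) ℝ) : Prop :=
  ∀ i j : Fin N, ‖blk X i j‖ ≤ c * Real.exp (-γ * dist i j)

/-- `dist` is nonnegative, symmetric, and satisfies the triangle inequality. -/
structure IsDist {N : ℕ} (dist : Fin N → Fin N → ℝ) : Prop where
  nonneg : ∀ i j, 0 ≤ dist i j
  symm : ∀ i j, dist i j = dist j i
  triangle : ∀ i j k, dist i j ≤ dist i k + dist k j

/-- `A` is `(τ, e^{-ρ})`-stable: `‖A^k‖ ≤ τ e^{-ρ k}` for every `k ≥ 0`. -/
def IsExpStable {n : Type*} [Fintype n] [DecidableEq n] (τ ρ : ℝ)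
    (A : Matrix n n ℝ) : Prop :=
  ∀ k : ℕ, ‖A ^ k‖ ≤ τ * Real.exp (-ρ * (k : ℝ))

/-- Smallest eigenvalue of a symmetric matrix, characterized via the Loewner order. -/
def eigMin {n : Type*} [Fintype n] [DecidableEq n] (A : Matrix n n ℝ) : ℝ :=
  sSup {t : ℝ | (A - t • (1 : Matrix n n ℝ)).PosSemidef}

/-- Largest eigenvalue of a symmetric matrix, characterized via the Loewner order. -/
def eigMax {n : Type*} [Fintype n] [DecidableEq n] (A : Matrix n n ℝ) : ℝ :=
  sInf {t : ℝ | (t • (1 : Matrix n n ℝ) - A).PosSemidef}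

/-- `G = ∑_{t=0}^∞ (A^t)ᵀ Q A^t`. -/
def Gmat {ιx : Type*} [Fintype ιx] [DecidableEq ιx] (A Q : Matrix ιx ιx ℝ) :
    Matrix ιx ιx ℝ :=
  ∑' t : ℕ, (A ^ t)ᵀ * Q * (A ^ t)

section LQRDefs

variable {ιx ιu : Type*} [Fintype ιx] [DecidableEq ιx] [Fintype ιu] [DecidableEq ιu]

/-- The `(k,m)` block of `M^{(H)}` (blocks indexed by `1 ≤ k, m ≤ H`). -/
def Mblk (A : Matrix ιx ιx ℝ) (B : Matrix ιx ιu ℝ) (Q : Matrix ιx ιx ℝ)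
    (R : Matrix ιu ιu ℝ) (S : Matrix ιu ιx ℝ) (k m : ℕ) : Matrix ιu ιu ℝ :=
  if k = m then Bᵀ * Gmat A Q * B + R
  else if m < k then Bᵀ * Gmat A Q * A ^ (k - m) * B + S * A ^ (k - m - 1) * B
  else Bᵀ * (A ^ (m - k))ᵀ * Gmat A Q * B + Bᵀ * (A ^ (m - k - 1))ᵀ * Sᵀ

/-- The `k`-th block of `J^{(H)}` (blocks indexed by `1 ≤ k ≤ H`). -/
def Jblk (A : Matrix ιx ιx ℝ) (B : Matrix ιx ιu ℝ) (Q : Matrix ιx ιx ℝ)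
    (S : Matrix ιu ιx ℝ) (k : ℕ) : Matrix ιu ιx ℝ :=
  Bᵀ * Gmat A Q * A ^ k + S * A ^ (k - 1)

/-- The `H × H` block matrix `M^{(H)}`. -/
def MH (H : ℕ) (A : Matrix ιx ιx ℝ) (B : Matrix ιx ιu ℝ) (Q : Matrix ιx ιx ℝ)
    (R : Matrix ιu ιu ℝ) (S : Matrix ιu ιx ℝ) :
    Matrix (Fin H × ιu) (Fin H × ιu) ℝ :=
  Matrix.of fun p q => Mblk A B Q R S ((p.1 : ℕ) + 1) ((q.1 : ℕ) + 1) p.2 q.2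

/-- The `H × 1` block matrix `J^{(H)}`. -/
def JH (H : ℕ) (A : Matrix ιx ιx ℝ) (B : Matrix ιx ιu ℝ) (Q : Matrix ιx ιx ℝ)
    (S : Matrix ιu ιx ℝ) : Matrix (Fin H × ιu) ιx ℝ :=
  Matrix.of fun p b => Jblk A B Q S ((p.1 : ℕ) + 1) p.2 b

/-- `L^{(H)} = -(M^{(H)})⁻¹ J^{(H)}`. -/
def LH (H : ℕ) (A : Matrix ιx ιx ℝ) (B : Matrix ιx ιu ℝ) (Q : Matrix ιx ιx ℝ)
    (R : Matrix ιu ιu ℝ) (S : Matrix ιu ιx ℝ) : Matrix (Fin H × ιu) ιx ℝ :=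
  -(MH H A B Q R S)⁻¹ * JH H A B Q S

/-- The `k`-th block `L_k^{(H)}` of `L^{(H)}` (0-based index `k : Fin H` is block `k+1`). -/
def LHblk (H : ℕ) (A : Matrix ιx ιx ℝ) (B : Matrix ιx ιu ℝ) (Q : Matrix ιx ιx ℝ)
    (R : Matrix ιu ιu ℝ) (S : Matrix ιu ιx ℝ) (k : Fin H) : Matrix ιu ιx ℝ :=
  Matrix.of fun a b => LH H A B Q R S (k, a) b

/-- `P` solves the discrete algebraic Riccati equation. -/
def IsDARE (A : Matrix ιx ιx ℝ) (B : Matrix ιx ιu ℝ) (Q : Matrix ιx ιx ℝ)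
    (R : Matrix ιu ιu ℝ) (S : Matrix ιu ιx ℝ) (P : Matrix ιx ιx ℝ) : Prop :=
  P = Aᵀ * P * A - (Aᵀ * P * B + Sᵀ) * (R + Bᵀ * P * B)⁻¹ * (Bᵀ * P * A + S) + Q

/-- The optimal LQR state-feedback gain `K = (R + BᵀPB)⁻¹(BᵀPA + S)`. -/
def optGain (A : Matrix ιx ιx ℝ) (B : Matrix ιx ιu ℝ)
    (R : Matrix ιu ιu ℝ) (S : Matrix ιu ιx ℝ) (P : Matrix ιx ιx ℝ) : Matrix ιu ιx ℝ :=
  (R + Bᵀ * P * B)⁻¹ * (Bᵀ * P * A + S)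

end LQRDefs

/-- The constant `c_M`. -/
def cMconst (N : ℕ) (τ ρ b q r s nQ nS : ℝ) : ℝ :=
  b ^ 2 * (N : ℝ) ^ 2 * (τ ^ 2 * nQ / (1 - Real.exp (-(2 * ρ))) + 2 * q)
    + b * (N : ℝ) * (s + τ * nS) + r

/-- The constant `c_J`. -/
def cJconst (N : ℕ) (τ ρ b q s nQ nS : ℝ) : ℝ :=
  b * (N : ℝ) * (τ ^ 2 * nQ / (1 - Real.exp (-(2 * ρ))) + 2 * q) + s + τ * nS

/-- The constant `c_K` of the open-loop-stable spatial-decay theorem. -/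
def cKconst (N : ℕ) (τ ρ b q s nB nQ nS nK lmin : ℝ) : ℝ :=
  2 * τ ^ 3 * (nB ^ 2 * nK * nQ + nB * nK * nS)
      / ((1 - Real.exp (-(2 * ρ))) ^ ((5 : ℝ) / 2) * lmin)
    + 2 * τ ^ 2 * (nB * nQ + nS) / ((1 - Real.exp (-(2 * ρ))) ^ 2 * lmin)
    + 2 * cJconst N τ ρ b q s nQ nS

/-- The constant `γ_K` of the open-loop-stable spatial-decay theorem. -/
def gammaKconst (N : ℕ) (γ τ ρ a b q r s nB nQ nS lmin lmaxR : ℝ) : ℝ :=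
  (γ * ρ * lmin / (ρ + Real.log (a * (N : ℝ)))) *
    (1 / ((lmaxR + 4 * τ ^ 2 * (nB ^ 2 * nQ + nB * nS)
          / (1 - Real.exp (-(2 * ρ))) ^ 2) *
        Real.log (γ * cMconst N τ ρ b q r s nQ nS * (N : ℝ) ^ 2
          + cMconst N τ ρ b q r s nQ nS * (N : ℝ) + 1) + lmin))

section Aux
variable {N : ℕ} {d e : Fin N → ℕ}

private lemma sigma_sum (f : BIdx e → ℝ) :
    ∑ s : BIdx e, f s = ∑ j : Fin N, ∑ b : Fin (e j), f ⟨j, b⟩ := by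
  rw [← Finset.univ_sigma_univ, Finset.sum_sigma]

private lemma norm_blk_le (X : Matrix (BIdx d) (BIdx e) ℝ) (i j : Fin N) : ‖blk X i j‖ ≤ ‖X‖ := by
  rw [Matrix.l2_opNorm_def]
  refine ContinuousLinearMap.opNorm_le_bound _ (norm_nonneg X) fun x => ?_
  set x' : EuclideanSpace ℝ (BIdx e) :=
    WithLp.toLp 2 (fun s : BIdx e => if hs : s.1 = j then x (Fin.cast (congrArg e hs) s.2) else 0) with hx'
  have hx'j : ∀ b : Fin (e j), x' ⟨j, b⟩ = x b := by
    intro b; simp [hx']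
  have hnx' : ‖x'‖ = ‖x‖ := by
    rw [EuclideanSpace.norm_eq, EuclideanSpace.norm_eq]
    congr 1
    rw [sigma_sum (fun s => ‖x' s‖ ^ 2)]
    rw [Finset.sum_eq_single j]
    · exact Finset.sum_congr rfl fun b _ => by rw [hx'j]
    · intro j' _ hj'
      apply Finset.sum_eq_zero
      intro b _
      simp [hx', hj']
    · simp
  have hmv : ∀ a : Fin (d i), (X *ᵥ x') ⟨i, a⟩ = (blk X i j *ᵥ (x : Fin (e j) → ℝ)) a := by
    intro a
    show ∑ s : BIdx e, X ⟨i,a⟩ s * x' s = _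
    rw [sigma_sum (fun s => X ⟨i,a⟩ s * x' s), Finset.sum_eq_single j]
    · exact Finset.sum_congr rfl fun b _ => by rw [hx'j]; rfl
    · intro j' _ hj'; apply Finset.sum_eq_zero; intro b _; simp [hx', hj']
    · simp
  calc ‖(Matrix.toEuclideanLin (blk X i j)).toContinuousLinearMap x‖
      ≤ ‖(WithLp.equiv 2 (BIdx d → ℝ)).symm (X *ᵥ x')‖ := by
        rw [EuclideanSpace.norm_eq, EuclideanSpace.norm_eq]
        apply Real.sqrt_le_sqrt
        calc ∑ a : Fin (d i), ‖Matrix.toEuclideanLin (blk X i j) x a‖ ^ 2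
            = ∑ a : Fin (d i), ‖(X *ᵥ x') ⟨i, a⟩‖ ^ 2 := by
              refine Finset.sum_congr rfl fun a _ => ?_
              rw [hmv a, Matrix.toEuclideanLin_apply]
          _ ≤ ∑ s : BIdx d, ‖(X *ᵥ x') s‖ ^ 2 := by
              rw [sigma_sum (fun s => ‖(X *ᵥ x') s‖ ^ 2)]
              exact Finset.single_le_sum (f := fun i' => ∑ a : Fin (d i'), ‖(X *ᵥ x') ⟨i', a⟩‖ ^ 2)
                (fun i' _ => Finset.sum_nonneg fun a _ => sq_nonneg _) (Finset.mem_univ i)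
          _ = ∑ s : BIdx d, ‖(WithLp.equiv 2 (BIdx d → ℝ)).symm (X *ᵥ x') s‖ ^ 2 := rfl
    _ ≤ ‖X‖ * ‖x'‖ := Matrix.l2_opNorm_mulVec X x'
    _ = ‖X‖ * ‖x‖ := by rw [hnx']

private def blkCLM (d : Fin N → ℕ) (i j : Fin N) :
    Matrix (BIdx d) (BIdx d) ℝ →L[ℝ] Matrix (Fin (d i)) (Fin (d j)) ℝ :=
  LinearMap.toContinuousLinearMap
    { toFun := fun X => blk X i j
      map_add' := fun _ _ => rfl
      map_smul' := fun _ _ => rfl }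

private lemma blk_pow_eq_zero {d : Fin N → ℕ} (dist : Fin N → Fin N → ℕ)
    (hdist : IsDist fun i j => (dist i j : ℝ)) (hdiag : ∀ i, dist i i = 0)
    (Ac : Matrix (BIdx d) (BIdx d) ℝ)
    (hsparse : ∀ i j, 1 < dist i j → blk Ac i j = 0) :
    ∀ (k : ℕ) (i j : Fin N), k < dist i j → blk (Ac ^ k) i j = 0 := by
  intro k
  induction k with
  | zero =>
    intro i j h
    have hij : i ≠ j := by rintro rfl; simp [hdiag i] at h
    ext a b
    simp only [pow_zero, blk, Matrix.of_apply, Matrix.one_apply]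
    rw [if_neg, Matrix.zero_apply]
    intro hc
    exact hij (congrArg Sigma.fst hc)
  | succ k ih =>
    intro i j h
    ext a b
    simp only [blk, Matrix.of_apply, Matrix.zero_apply, pow_succ, Matrix.mul_apply]
    apply Finset.sum_eq_zero
    rintro ⟨l, c⟩ _
    by_cases hl : k < dist i l
    · have h0 : (Ac ^ k) ⟨i, a⟩ ⟨l, c⟩ = 0 := by
        have := congrFun (congrFun (ih i l hl) a) c
        simpa [blk] using this
      rw [h0, zero_mul]
    · push_neg at hl
      have h1 : 1 < dist l j := by
        have : (dist i j : ℝ) ≤ (dist i l : ℝ) + (dist l j : ℝ) := hdist.triangle i j l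
        have : dist i j ≤ dist i l + dist l j := by exact_mod_cast this
        omega
      have h0 : Ac ⟨l, c⟩ ⟨j, b⟩ = 0 := by
        have := congrFun (congrFun (hsparse l j h1) c) b
        simpa [blk] using this
      rw [h0, mul_zero]

private lemma l2_norm_one_le : ‖(1 : Matrix (BIdx d) (BIdx d) ℝ)‖ ≤ 1 := by
  rw [Matrix.l2_opNorm_def]
  refine ContinuousLinearMap.opNorm_le_bound _ zero_le_one fun x => ?_
  rw [one_mul]
  apply le_of_eq
  congr 1
  simp [Matrix.toEuclideanLin_apply, Matrix.one_mulVec]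

private lemma l2_norm_pow_le (M : Matrix (BIdx d) (BIdx d) ℝ) (k : ℕ) : ‖M ^ k‖ ≤ ‖M‖ ^ k := by
  induction k with
  | zero => simpa using l2_norm_one_le
  | succ k ih =>
    rw [pow_succ, pow_succ]
    exact le_trans (norm_mul_le _ _) (mul_le_mul_of_nonneg_right ih (norm_nonneg M))

end Aux

set_option maxHeartbeats 1000000 in
/-- Proposition: the matrix exponential of a 1-hop sparse matrix is SED. -/
theorem matrix_exp_SED
    {N : ℕ} (hN : 1 ≤ N) {d : Fin N → ℕ}
    (dist : Fin N → Fin N → ℕ) (hdist : IsDist fun i j => (dist i j : ℝ))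
    (hdiag : ∀ i, dist i i = 0)
    (Ac : Matrix (BIdx d) (BIdx d) ℝ)
    (hsparse : ∀ i j, 1 < dist i j → blk Ac i j = 0)
    (Δt : ℝ) (hΔt : 0 < Δt) :
    (∀ i j, ‖blk (NormedSpace.exp (Δt • Ac)) i j‖
        ≤ Real.exp (Δt * ‖Ac‖) * (Δt * ‖Ac‖) ^ (dist i j)) ∧
    (Δt * ‖Ac‖ < 1 →
      IsSED (fun i j => (dist i j : ℝ)) (Real.exp (Δt * ‖Ac‖)) (-Real.log (Δt * ‖Ac‖))
        (NormedSpace.exp (Δt • Ac))) := by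
  set x : ℝ := Δt * ‖Ac‖ with hxdef
  have hx0 : 0 ≤ x := mul_nonneg hΔt.le (norm_nonneg Ac)
  have hnx : ‖Δt • Ac‖ = x := by
    rw [norm_smul, Real.norm_eq_abs, abs_of_pos hΔt]
  have hsum : Summable (fun k : ℕ => ((k.factorial : ℝ))⁻¹ • (Δt • Ac) ^ k) :=
    NormedSpace.expSeries_summable' (𝕂 := ℝ) (Δt • Ac)
  -- the blockwise series
  have main : ∀ i j, ‖blk (NormedSpace.exp (Δt • Ac)) i j‖ ≤ Real.exp x * x ^ (dist i j) := by
    intro i j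
    set D := dist i j with hD
    set f : ℕ → Matrix (Fin (d i)) (Fin (d j)) ℝ :=
      fun k => ((k.factorial : ℝ))⁻¹ • blk ((Δt • Ac) ^ k) i j with hf
    have hfCLM : ∀ k, f k = blkCLM d i j (((k.factorial : ℝ))⁻¹ • (Δt • Ac) ^ k) := fun k => rfl
    have hblk_tsum : blk (NormedSpace.exp (Δt • Ac)) i j = ∑' k, f k := by
      have := (blkCLM d i j).map_tsum hsum
      rw [NormedSpace.exp_eq_tsum ℝ]
      exact this
    have hfsum : Summable f := by
      exact (hsum.map (blkCLM d i j).toLinearMap.toAddMonoidHom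
        (blkCLM d i j).continuous).congr fun k => (hfCLM k).symm
    -- vanishing of early terms
    have hzero : ∀ k < D, f k = 0 := by
      intro k hk
      have hblk0 : blk ((Δt • Ac) ^ k) i j = 0 := by
        have h1 : (Δt • Ac) ^ k = Δt ^ k • Ac ^ k := smul_pow Δt Ac k
        have h2 := blk_pow_eq_zero dist hdist hdiag Ac hsparse k i j hk
        have : blk ((Δt • Ac) ^ k) i j = Δt ^ k • blk (Ac ^ k) i j := by
          rw [h1]; rfl
        rw [this, h2, smul_zero]
      simp [hf, hblk0]
    have hshift : ∑' k, f k = ∑' m, f (m + D) := by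
      have := Summable.sum_add_tsum_nat_add (f := f) D hfsum
      rw [← this, Finset.sum_eq_zero, zero_add]
      intro k hk
      exact hzero k (Finset.mem_range.mp hk)
    -- majorant
    have hbound : ∀ m : ℕ, ‖f (m + D)‖ ≤ (((m).factorial : ℝ))⁻¹ * x ^ m * x ^ D := by
      intro m
      have h1 : ‖f (m + D)‖ ≤ (((m + D).factorial : ℝ))⁻¹ * x ^ (m + D) := by
        rw [hf]
        simp only [norm_smul, Real.norm_eq_abs, abs_inv, Nat.abs_cast]
        refine mul_le_mul_of_nonneg_left ?_ (by positivity)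
        calc ‖blk ((Δt • Ac) ^ (m + D)) i j‖ ≤ ‖(Δt • Ac) ^ (m + D)‖ := norm_blk_le _ i j
          _ ≤ ‖Δt • Ac‖ ^ (m + D) := l2_norm_pow_le _ _
          _ = x ^ (m + D) := by rw [hnx]
      refine h1.trans ?_
      rw [pow_add, ← mul_assoc]
      refine mul_le_mul_of_nonneg_right (mul_le_mul_of_nonneg_right ?_ (by positivity))
        (by positivity)
      refine inv_anti₀ (by positivity) ?_
      exact_mod_cast Nat.factorial_le (Nat.le_add_right m D)
    have hmaj : Summable (fun m : ℕ => (((m).factorial : ℝ))⁻¹ * x ^ m * x ^ D) := by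
      have := Real.summable_pow_div_factorial x
      simpa [div_eq_mul_inv, mul_comm, mul_assoc, mul_left_comm] using this.mul_right (x ^ D)
    have hnsum : Summable (fun m : ℕ => ‖f (m + D)‖) :=
      Summable.of_nonneg_of_le (fun m => norm_nonneg _) hbound hmaj
    calc ‖blk (NormedSpace.exp (Δt • Ac)) i j‖ = ‖∑' m, f (m + D)‖ := by
          rw [hblk_tsum, hshift]
      _ ≤ ∑' m, ‖f (m + D)‖ := norm_tsum_le_tsum_norm hnsum
      _ ≤ ∑' m, (((m).factorial : ℝ))⁻¹ * x ^ m * x ^ D := Summable.tsum_le_tsum hbound hnsum hmaj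
      _ = (∑' m, (((m).factorial : ℝ))⁻¹ * x ^ m) * x ^ D := by
          rw [← tsum_mul_right]
      _ = Real.exp x * x ^ D := by
          congr 1
          rw [Real.exp_eq_exp_ℝ, NormedSpace.exp_eq_tsum ℝ]
          exact tsum_congr fun m => (smul_eq_mul _ _).symm
  refine ⟨main, fun hx1 => ?_⟩
  intro i j
  refine (main i j).trans ?_
  refine mul_le_mul_of_nonneg_left ?_ (Real.exp_pos x).le
  rcases eq_or_lt_of_le hx0 with h0 | h0
  · rcases Nat.eq_zero_or_pos (dist i j) with hD | hD
    · simp [hD]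
    · rw [← h0, zero_pow hD.ne']
      exact (Real.exp_pos _).le
  · apply le_of_eq
    have h2 : (-(-Real.log x) * (dist i j : ℝ)) = (dist i j : ℝ) * Real.log x := by ring
    rw [h2, Real.exp_nat_mul, Real.exp_log h0]
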